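/- In a soft heap process with corruption parameter ε ≤ 1/4 where each pop inserts at most 4 new elements, performing p = ⌈k/(1−4ε)⌉ pops guarantees that the popped elements include the k smallest elements ever inserted, since the number of corrupted elements is at most ε times the number of insertions, which is at most 4p. -/

import Mathlib

/-- In a soft-heap process with corruption parameter ε (ε ≤ 1/4,
here ε < 1/4 so that p is finite) where each pop triggers at most 4 insertions,
performing p = ⌈k/(1−4ε)⌉ pops guarantees k ≤ p − 4pε uncorrupted pops, and the
popped multiset P contains the k smallest of the inserted elements I.  Here
C ⊆ P is the corrupted portion, with card C ≤ ε·(card I), card I ≤ 4p, and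
every uncorrupted popped element is ≤ every element never popped. -/
theorem soft_heap_pop_count (ε : ℝ) (hε0 : 0 ≤ ε) (hε : ε < 1 / 4)
    (k : ℕ) (hk : 1 ≤ k) (p : ℕ) (hp : p = ⌈(k : ℝ) / (1 - 4 * ε)⌉₊)
    (I P C : Multiset ℝ) (hPI : P ≤ I) (hCP : C ≤ P)
    (hI : Multiset.card I ≤ 4 * p) (hcardP : Multiset.card P = p)
    (hC : (Multiset.card C : ℝ) ≤ ε * Multiset.card I)
    (hgood : ∀ x ∈ P - C, ∀ y ∈ I - P, x ≤ y) :
    (k : ℝ) ≤ (p : ℝ) - 4 * p * ε ∧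
    (↑((Multiset.sort I (· ≤ ·)).take k) : Multiset ℝ) ≤ P := by
  classical
  have h4 : (0:ℝ) < 1 - 4 * ε := by linarith
  have hple : (k : ℝ) / (1 - 4 * ε) ≤ (p : ℝ) := by
    rw [hp]; exact Nat.le_ceil _
  have hnum : (k : ℝ) ≤ (p : ℝ) - 4 * p * ε := by
    rw [div_le_iff₀ h4] at hple; nlinarith
  refine ⟨hnum, ?_⟩
  -- good elements
  set G : Multiset ℝ := P - C with hG
  have hGP : G ≤ P := tsub_le_self
  have hGI : G ≤ I := hGP.trans hPI
  have hkG : k ≤ Multiset.card G := by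
    have hcard : Multiset.card G = p - Multiset.card C := by
      rw [hG, Multiset.card_sub hCP, hcardP]
    have hCle : Multiset.card C ≤ p := by
      rw [← hcardP]; exact Multiset.card_le_card hCP
    have : (Multiset.card G : ℝ) = (p : ℝ) - Multiset.card C := by
      rw [hcard, Nat.cast_sub hCle]
    have hCI : (Multiset.card C : ℝ) ≤ ε * (4 * p) := by
      refine hC.trans ?_
      have : (Multiset.card I : ℝ) ≤ (4 * p : ℕ) := Nat.cast_le.mpr hI
      push_cast at this ⊢
      nlinarith
    have : (k : ℝ) ≤ (Multiset.card G : ℝ) := by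
      rw [this]; push_cast at hCI ⊢; nlinarith
    exact_mod_cast this
  -- list setup
  set l : List ℝ := Multiset.sort I (· ≤ ·) with hl
  have hsorted : List.Pairwise (· ≤ ·) l := Multiset.pairwise_sort _ _
  set T : Multiset ℝ := ↑(l.take k) with hT
  set D : Multiset ℝ := ↑(l.drop k) with hD
  have hTD : T + D = I := by
    rw [hT, hD, Multiset.coe_add, List.take_append_drop, hl, Multiset.sort_eq]
  have hcardT : Multiset.card T ≤ k := by
    rw [hT, Multiset.coe_card, List.length_take]; exact min_le_left _ _
  rw [Multiset.le_iff_count]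
  intro a
  by_cases hmem : a ∈ I - P
  · -- hard case
    have hGa : ∀ x ∈ G, x ≤ a := fun x hx => hgood x hx a hmem
    set m : ℕ := Multiset.countP (· < a) I with hm
    -- k ≤ m + count a P
    have hkey : k ≤ m + Multiset.count a P := by
      have h1 : Multiset.card G = Multiset.countP (· < a) G +
          Multiset.countP (fun x => ¬ x < a) G :=
        Multiset.card_eq_countP_add_countP _ _
      have h2 : Multiset.countP (· < a) G ≤ m :=
        Multiset.countP_le_of_le _ hGI
      have h3 : Multiset.countP (fun x => ¬ x < a) G ≤ Multiset.count a G := by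
        rw [Multiset.count_eq_card_filter_eq, Multiset.countP_eq_card_filter]
        apply Multiset.card_le_card
        have hfe : Multiset.filter (fun x => ¬ x < a) G =
            Multiset.filter (fun x => a = x) G := by
          apply Multiset.filter_congr
          intro b hb
          constructor
          · intro hna; exact (le_antisymm (hGa b hb) (not_lt.mp hna)).symm
          · intro he; rw [← he]; exact lt_irrefl a
        rw [hfe]
      have h4' : Multiset.count a G ≤ Multiset.count a P :=
        Multiset.count_le_of_le _ hGP
      omega
    by_cases h0 : Multiset.count a T = 0
    · omega
    · have haT : a ∈ l.take k := by
        rw [← Multiset.mem_coe, ← hT]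
        exact Multiset.count_pos.mp (Nat.pos_of_ne_zero h0)
      have hDa : ∀ y ∈ l.drop k, a ≤ y := by
        have hPW : List.Pairwise (· ≤ ·) (l.take k ++ l.drop k) := by
          rw [List.take_append_drop]; exact hsorted
        exact fun y hy => (List.pairwise_append.mp hPW).2.2 a haT y hy
      have hDzero : Multiset.countP (· < a) D = 0 := by
        rw [Multiset.countP_eq_zero]
        intro y hy
        exact not_lt.mpr (hDa y (by rwa [hD, Multiset.mem_coe] at hy))
      have hmT : m = Multiset.countP (· < a) T := by
        rw [hm, ← hTD, Multiset.countP_add, hDzero, add_zero]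
      have hcount_le : Multiset.count a T ≤ Multiset.countP (fun x => ¬ x < a) T := by
        rw [Multiset.count_eq_card_filter_eq, Multiset.countP_eq_card_filter]
        apply Multiset.card_le_card
        apply Multiset.monotone_filter_right
        intro b hb
        rw [← hb]; exact lt_irrefl a
      have hsum : Multiset.countP (· < a) T +
          Multiset.countP (fun x => ¬ x < a) T = Multiset.card T :=
        (Multiset.card_eq_countP_add_countP _ _).symm
      omega
  · -- easy case: count a I ≤ count a P
    have : Multiset.count a (I - P) = 0 := Multiset.count_eq_zero_of_notMem hmem
    rw [Multiset.count_sub] at this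
    have hIP : Multiset.count a I ≤ Multiset.count a P := by omega
    have hTI : Multiset.count a T ≤ Multiset.count a I := by
      rw [← hTD, Multiset.count_add]; omega
    omega
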